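/- Let κ_R, κ_LT, w, τ, MC > 0 with MC ≤ κ_R²/(4·w·τ·κ_LT), and define q_f = ((κ_R + √(κ_R² − 4·τ·MC·κ_LT·w)) / (2·τ·MC))⁵ and the profit π(q) = (5/4)·κ_R·q^{4/5} − τ·MC·q − (5/3)·w·κ_LT·q^{3/5} for q > 0. Then π(q_f) = (1/(192·MC⁴·τ⁴))·(κ_R + √(κ_R² − 4·MC·w·τ·κ_LT))³·(−16·MC·w·τ·κ_LT + 3·κ_R·(κ_R + √(κ_R² − 4·MC·w·τ·κ_LT))), and π(q_f) > 0 if and only if MC < 15·κ_R²/(64·w·τ·κ_LT). -/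

import Mathlib

set_option maxHeartbeats 1000000 in
/-- **Export profit at the optimum and the export cutoff without fixed costs.**
With `q_f = ((κ_R + √(κ_R² - 4τ·MC·κ_LT·w))/(2τ·MC))⁵` and profit
`π(q) = (5/4)κ_R q^{4/5} - τ·MC·q - (5/3)wκ_LT q^{3/5}`, the profit at `q_f` equals the
displayed closed form, and it is positive iff `MC < 15κ_R²/(64wτκ_LT)`. -/
theorem stmt12 (κR κLT w τ MC : ℝ) (hκR : 0 < κR) (hκLT : 0 < κLT)
    (hw : 0 < w) (hτ : 0 < τ) (hMC : 0 < MC)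
    (hMCle : MC ≤ κR ^ 2 / (4 * w * τ * κLT))
    (qf : ℝ) (hqf : qf = ((κR + Real.sqrt (κR ^ 2 - 4 * τ * MC * κLT * w)) / (2 * τ * MC)) ^ 5)
    (profit : ℝ → ℝ)
    (hprofit : profit = fun q =>
      (5 / 4) * κR * q ^ ((4 / 5 : ℝ)) - τ * MC * q - (5 / 3) * w * κLT * q ^ ((3 / 5 : ℝ))) :
    profit qf =
      (1 / (192 * MC ^ 4 * τ ^ 4)) *
        (κR + Real.sqrt (κR ^ 2 - 4 * MC * w * τ * κLT)) ^ 3 *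
        (-(16 * MC * w * τ * κLT) +
          3 * κR * (κR + Real.sqrt (κR ^ 2 - 4 * MC * w * τ * κLT))) ∧
    (0 < profit qf ↔ MC < 15 * κR ^ 2 / (64 * w * τ * κLT)) := by
  have hss : κR ^ 2 - 4 * MC * w * τ * κLT = κR ^ 2 - 4 * τ * MC * κLT * w := by ring
  rw [hss]
  have hD : 0 ≤ κR ^ 2 - 4 * τ * MC * κLT * w := by
    have h4 : (0:ℝ) < 4 * w * τ * κLT := by positivity
    have := (le_div_iff₀ h4).mp hMCle
    nlinarith
  set s := Real.sqrt (κR ^ 2 - 4 * τ * MC * κLT * w) with hs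
  have hs0 : 0 ≤ s := Real.sqrt_nonneg _
  have hs2 : s ^ 2 = κR ^ 2 - 4 * τ * MC * κLT * w := Real.sq_sqrt hD
  clear_value s
  set x := (κR + s) / (2 * τ * MC) with hxdef
  have hx0 : 0 < x := div_pos (by linarith) (by positivity)
  have hτMC : (2 * τ * MC) ≠ 0 := by positivity
  have hxe : κR + s = 2 * τ * MC * x := by
    rw [hxdef]; field_simp
  clear_value x
  have key4 : 4 * τ * MC * (τ * MC * x ^ 2 - κR * x + w * κLT) = 0 := by
    linear_combination (-(2 * τ * MC * x - κR + s)) * hxe + hs2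
  have key : τ * MC * x ^ 2 - κR * x + w * κLT = 0 := by
    rcases mul_eq_zero.mp key4 with h | h
    · exact absurd h (by positivity)
    · exact h
  have hr4 : (x ^ 5) ^ ((4 / 5 : ℝ)) = x ^ 4 := by
    rw [← Real.rpow_natCast x 5, ← Real.rpow_natCast x 4, ← Real.rpow_mul hx0.le]
    norm_num
  have hr3 : (x ^ 5) ^ ((3 / 5 : ℝ)) = x ^ 3 := by
    rw [← Real.rpow_natCast x 5, ← Real.rpow_natCast x 3, ← Real.rpow_mul hx0.le]
    norm_num
  subst hprofit hqf
  simp only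
  rw [hr4, hr3, hxe]
  have hval : (5 / 4) * κR * x ^ 4 - τ * MC * x ^ 5 - (5 / 3) * w * κLT * x ^ 3 =
      1 / (192 * MC ^ 4 * τ ^ 4) * (2 * τ * MC * x) ^ 3 *
        (-(16 * MC * w * τ * κLT) + 3 * κR * (2 * τ * MC * x)) := by
    field_simp
    linear_combination (-2304) * key
  refine ⟨hval, ?_⟩
  rw [hval]
  have hval2 : 1 / (192 * MC ^ 4 * τ ^ 4) * (2 * τ * MC * x) ^ 3 *
        (-(16 * MC * w * τ * κLT) + 3 * κR * (2 * τ * MC * x)) =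
      x ^ 3 * ((1/4) * κR * x - (2/3) * w * κLT) := by
    field_simp
    ring
  rw [hval2]
  have hx3 : 0 < x ^ 3 := by positivity
  have hiff1 : 0 < x ^ 3 * ((1/4) * κR * x - (2/3) * w * κLT) ↔
      0 < (1/4) * κR * x - (2/3) * w * κLT := by
    constructor
    · intro h
      by_contra h'
      push_neg at h'
      nlinarith
    · intro h
      exact mul_pos hx3 h
  rw [hiff1]
  have heq : (1/4) * κR * x - (2/3) * w * κLT =
      (3 * κR * (κR + s) - 16 * τ * MC * w * κLT) / (24 * τ * MC) := by
    rw [hxe]; field_simp; ring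
  rw [heq]
  rw [lt_div_iff₀ (by positivity : (0:ℝ) < 24 * τ * MC), zero_mul]
  rw [lt_div_iff₀ (by positivity : (0:ℝ) < 64 * w * τ * κLT)]
  constructor
  · intro h
    by_contra h'
    push_neg at h'
    nlinarith [mul_pos (mul_pos (mul_pos hτ hMC) hw) hκLT, mul_nonneg hs0 hκR.le,
      sq_nonneg (3 * κR * s - (16 * τ * MC * w * κLT - 3 * κR ^ 2)), hs2]
  · intro h
    have hcm : 0 < τ * MC * w * κLT := by positivity
    by_cases h16 : 16 * τ * MC * w * κLT ≤ 3 * κR ^ 2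
    · by_contra h'
      push_neg at h'
      have h1 : 3 * κR * s ≤ 0 := by nlinarith
      have h2 : s ≤ 0 := by nlinarith
      have h3 : s = 0 := le_antisymm h2 hs0
      rw [h3] at hs2
      nlinarith [sq_nonneg κR]
    · push_neg at h16
      have hsq : (16 * τ * MC * w * κLT - 3 * κR ^ 2) ^ 2 < (3 * κR * s) ^ 2 := by
        nlinarith [hs2, mul_pos hcm (show (0:ℝ) < 15 * κR ^ 2 - MC * (64 * w * τ * κLT) from by
          linarith)]
      have hlt : 16 * τ * MC * w * κLT - 3 * κR ^ 2 < 3 * κR * s :=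
        lt_of_pow_lt_pow_left₀ 2 (by positivity) hsq
      nlinarith
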